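/- arXiv:1709.03836 — 2 statements merged into one kernel-verified Lean document; each statement's English description precedes it below -/
import Mathlib

section
/- The roots of a monic polynomial depend Hölder-continuously on its coefficients: for each degree k there exist constants such that if p(t) = t^k + a_{k-1}t^{k-1} + ⋯ + a₀ and q(t) = t^k + b_{k-1}t^{k-1} + ⋯ + b₀ are monic polynomials over ℂ with coefficients in a fixed bounded set, then for every root α of p there exists a root β of q with |α - β| ≤ C (max_i |a_i - b_i|)^{1/k}. -/
open Polynomial

private lemma aux_prod_norm (s : Multiset ℂ) :
    ‖s.prod‖ = (s.map (fun z => ‖z‖)).prod := by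
  induction s using Multiset.induction_on with
  | empty => simp
  | cons x s ih => simp [norm_mul, ih]

private lemma aux_pow_le_prod (a : ℝ) (ha : 0 ≤ a) (s : Multiset ℝ)
    (h : ∀ x ∈ s, a ≤ x) : a ^ Multiset.card s ≤ s.prod := by
  induction s using Multiset.induction_on with
  | empty => simp
  | cons x s ih =>
    have hx : a ≤ x := h x (Multiset.mem_cons_self _ _)
    have ih' := ih (fun y hy => h y (Multiset.mem_cons_of_mem hy))
    simp only [Multiset.card_cons, Multiset.prod_cons, pow_succ]
    rw [mul_comm]
    exact mul_le_mul hx ih' (pow_nonneg ha _) (ha.trans hx)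

/-- Hölder dependence of roots of monic polynomials on their coefficients: for each degree
`k ≥ 1` and each bound `M` on the coefficients, there is a constant `C` such that for
monic polynomials `p(t) = t^k + ∑ a_i t^i`, `q(t) = t^k + ∑ b_i t^i` over `ℂ` with
`|a_i|, |b_i| ≤ M`, every root `α` of `p` admits a root `β` of `q` with
`|α - β| ≤ C (max_i |a_i - b_i|)^{1/k}`. -/
theorem stmt_1 (k : ℕ) (hk : 1 ≤ k) (M : ℝ) (hM : 0 < M) :
    ∃ C > 0, ∀ a b : Fin k → ℂ,
      (∀ i, ‖a i‖ ≤ M) → (∀ i, ‖b i‖ ≤ M) →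
      ∀ α : ℂ, α ^ k + ∑ i : Fin k, a i * α ^ (i : ℕ) = 0 →
      ∃ β : ℂ, β ^ k + ∑ i : Fin k, b i * β ^ (i : ℕ) = 0 ∧
        ‖α - β‖ ≤ C * (⨆ i : Fin k, ‖a i - b i‖) ^ ((1 : ℝ) / k) := by
  have hk0 : k ≠ 0 := by omega
  haveI : NeZero k := ⟨hk0⟩
  set R : ℝ := 1 + k * M with hR
  have hR1 : 1 ≤ R := by
    have : (0:ℝ) ≤ k * M := by positivity
    linarith
  have hR0 : 0 < R := lt_of_lt_of_le one_pos hR1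
  refine ⟨((k : ℝ) * R ^ k) ^ ((1:ℝ)/k), by positivity, ?_⟩
  intro a b ha hb α hα
  set ε : ℝ := ⨆ i : Fin k, ‖a i - b i‖ with hε
  have hεub : ∀ i : Fin k, ‖a i - b i‖ ≤ ε :=
    fun i => le_ciSup (f := fun i => ‖a i - b i‖) (Set.Finite.bddAbove (Set.finite_range _)) i
  have hε0 : 0 ≤ ε := le_trans (norm_nonneg _) (hεub ⟨0, by omega⟩)
  -- bound on the root α
  have hαR : ‖α‖ ≤ R := by
    by_cases h1 : ‖α‖ ≤ 1
    · linarith [mul_nonneg (Nat.cast_nonneg (α := ℝ) k) hM.le]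
    · push_neg at h1
      have hα1 : 1 ≤ ‖α‖ := h1.le
      have heq : α ^ k = -∑ i : Fin k, a i * α ^ (i : ℕ) := by
        linear_combination hα
      have hnorm : ‖α‖ ^ k ≤ (k : ℝ) * M * ‖α‖ ^ (k - 1) := by
        calc ‖α‖ ^ k = ‖α ^ k‖ := (norm_pow _ _).symm
          _ = ‖∑ i : Fin k, a i * α ^ (i : ℕ)‖ := by rw [heq, norm_neg]
          _ ≤ ∑ i : Fin k, ‖a i * α ^ (i : ℕ)‖ := norm_sum_le _ _
          _ ≤ ∑ _i : Fin k, M * ‖α‖ ^ (k - 1) := by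
              apply Finset.sum_le_sum
              intro i _
              rw [norm_mul, norm_pow]
              exact mul_le_mul (ha i)
                (pow_le_pow_right₀ hα1 (by omega)) (by positivity) hM.le
          _ = (k : ℝ) * M * ‖α‖ ^ (k - 1) := by
              rw [Finset.sum_const, Finset.card_univ, Fintype.card_fin,
                nsmul_eq_mul]; ring
      have hpow : ‖α‖ ^ k = ‖α‖ * ‖α‖ ^ (k - 1) := by
        rw [← pow_succ']
        congr 1
        omega
      have hpos : 0 < ‖α‖ ^ (k - 1) := by positivity
      have : ‖α‖ * ‖α‖ ^ (k - 1) ≤ (k : ℝ) * M * ‖α‖ ^ (k - 1) := by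
        rw [← hpow]; exact hnorm
      have hkM : ‖α‖ ≤ (k : ℝ) * M := le_of_mul_le_mul_right this hpos
      linarith
  -- the polynomial q
  set Q : ℂ[X] := ∑ i : Fin k, C (b i) * X ^ (i : ℕ) with hQ
  set P : ℂ[X] := X ^ k + Q with hP
  have hQdeg : Q.degree < (k : ℕ) := by
    apply lt_of_le_of_lt (Polynomial.degree_sum_le _ _)
    rw [Finset.sup_lt_iff (by exact_mod_cast WithBot.bot_lt_coe (k : ℕ))]
    intro i _
    exact lt_of_le_of_lt (Polynomial.degree_C_mul_X_pow_le _ _)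
      (by exact_mod_cast i.2)
  have hPmonic : P.Monic := by
    apply Polynomial.Monic.add_of_left (monic_X_pow k)
    rwa [Polynomial.degree_X_pow]
  have hPdeg : P.natDegree = k := by
    have : P.degree = (k : ℕ) := by
      rw [hP, Polynomial.degree_add_eq_left_of_degree_lt
        (by rwa [Polynomial.degree_X_pow]), Polynomial.degree_X_pow]
    exact Polynomial.natDegree_eq_of_degree_eq_some this
  have hsplits : Splits P := IsAlgClosed.splits P
  have hcard : Multiset.card P.roots = k := by
    rw [(Polynomial.splits_iff_card_roots).mp hsplits, hPdeg]
  have hprod : P = (Multiset.map (fun a => X - C a) P.roots).prod :=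
    hsplits.eq_prod_roots_of_monic hPmonic
  -- evaluate P at α
  have hevalform : ∀ z : ℂ, P.eval z = z ^ k + ∑ i : Fin k, b i * z ^ (i : ℕ) := by
    intro z
    simp [hP, hQ, Polynomial.eval_finset_sum]
  have hPα : P.eval α = ∑ i : Fin k, (b i - a i) * α ^ (i : ℕ) := by
    rw [hevalform]
    have : ∑ i : Fin k, (b i - a i) * α ^ (i : ℕ)
        = ∑ i : Fin k, b i * α ^ (i : ℕ) - ∑ i : Fin k, a i * α ^ (i : ℕ) := by
      rw [← Finset.sum_sub_distrib]
      exact Finset.sum_congr rfl fun i _ => by ring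
    rw [this]
    linear_combination hα
  have hPαbound : ‖P.eval α‖ ≤ (k : ℝ) * R ^ k * ε := by
    rw [hPα]
    calc ‖∑ i : Fin k, (b i - a i) * α ^ (i : ℕ)‖
        ≤ ∑ i : Fin k, ‖(b i - a i) * α ^ (i : ℕ)‖ := norm_sum_le _ _
      _ ≤ ∑ _i : Fin k, ε * R ^ k := by
          apply Finset.sum_le_sum
          intro i _
          rw [norm_mul, norm_pow]
          apply mul_le_mul
          · rw [norm_sub_rev]; exact hεub i
          · calc ‖α‖ ^ (i : ℕ) ≤ R ^ (i : ℕ) :=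
                pow_le_pow_left₀ (norm_nonneg _) hαR _
              _ ≤ R ^ k := pow_le_pow_right₀ hR1 (le_of_lt i.2)
          · positivity
          · exact hε0
      _ = (k : ℝ) * R ^ k * ε := by
          rw [Finset.sum_const, Finset.card_univ, Fintype.card_fin,
            nsmul_eq_mul]; ring
  -- pick the nearest root β
  have hne : P.roots.toFinset.Nonempty := by
    rw [Multiset.toFinset_nonempty]
    intro h
    rw [h] at hcard
    simp at hcard
    omega
  obtain ⟨β, hβmem, hβmin⟩ := Finset.exists_min_image P.roots.toFinset
    (fun r => ‖α - r‖) hne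
  have hβroot : P.eval β = 0 := by
    have : β ∈ P.roots := Multiset.mem_toFinset.mp hβmem
    exact Polynomial.isRoot_of_mem_roots this
  refine ⟨β, by rw [← hevalform]; exact hβroot, ?_⟩
  -- key estimate : ‖α - β‖ ^ k ≤ ‖P.eval α‖
  have hkey : ‖α - β‖ ^ k ≤ ‖P.eval α‖ := by
    have heval : P.eval α = (Multiset.map (fun r => α - r) P.roots).prod := by
      conv_lhs => rw [hprod]
      rw [Polynomial.eval_multiset_prod, Multiset.map_map]
      simp
    rw [heval, aux_prod_norm, Multiset.map_map]
    have := aux_pow_le_prod ‖α - β‖ (norm_nonneg _)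
      (Multiset.map (fun r => ‖α - r‖) P.roots) ?_
    · rw [Multiset.card_map, hcard] at this
      simpa using this
    · intro x hx
      obtain ⟨r, hr, rfl⟩ := Multiset.mem_map.mp hx
      exact hβmin r (Multiset.mem_toFinset.mpr hr)
  -- conclude with rpow
  have hfinal : ‖α - β‖ ^ k ≤ (k : ℝ) * R ^ k * ε := le_trans hkey hPαbound
  have h1 : ‖α - β‖ = ((‖α - β‖ ^ k : ℝ)) ^ ((1:ℝ)/k) := by
    rw [← Real.rpow_natCast ‖α - β‖ k, ← Real.rpow_mul (norm_nonneg _)]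
    rw [mul_one_div, div_self (by exact_mod_cast hk0), Real.rpow_one]
  rw [h1, ← Real.mul_rpow (by positivity) hε0]
  exact Real.rpow_le_rpow (by positivity) hfinal (by positivity)
end

section
/- Let Θ₁, Θ₂ ⊂ ℝ³ be two disjoint smooth compact strictly convex obstacles. There is no billiard ray (broken line reflecting off the obstacles by the law of reflection) that is tangent to Θ₁ ∪ Θ₂ at three or more distinct points. -/
open scoped RealInnerProductSpace

/-- A broken billiard ray outside the obstacle set `O`: the position `γ` is locally linear
on both sides of every time, moves with the right-velocity `ξ`, never enters the interior
of `O`, and at boundary points the velocity obeys the law of reflection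
`ξ⁺ = ξ⁻ - 2⟨ξ⁻, n⟩ n`. -/
def IsBilliardRay {n : ℕ} (O : Set (EuclideanSpace ℝ (Fin n)))
    (nv : EuclideanSpace ℝ (Fin n) → EuclideanSpace ℝ (Fin n))
    (γ ξ : ℝ → EuclideanSpace ℝ (Fin n)) : Prop :=
  (∀ t : ℝ, γ t ∉ interior O) ∧ (∀ t : ℝ, ξ t ≠ 0) ∧
  ∀ t : ℝ, ∃ v : EuclideanSpace ℝ (Fin n),
    (∀ᶠ s in nhdsWithin t (Set.Iic t), γ s = γ t + (s - t) • v) ∧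
    (∀ᶠ s in nhdsWithin t (Set.Ici t), γ s = γ t + (s - t) • ξ t) ∧
    (γ t ∉ frontier O → ξ t = v) ∧
    (γ t ∈ frontier O → ξ t = v - (2 * ⟪v, nv (γ t)⟫) • nv (γ t))

/-- At a tangency point the reflection is trivial. -/
lemma tangent_reflection {E : Type*} [NormedAddCommGroup E] [InnerProductSpace ℝ E]
    {v n ξ : E} (hn : ‖n‖ = 1) (hξ : ξ = v - (2 * ⟪v, n⟫) • n) (hperp : ⟪ξ, n⟫ = 0) :
    v = ξ := by
  have hnn : ⟪n, n⟫ = (1 : ℝ) := by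
    rw [real_inner_self_eq_norm_sq, hn]; norm_num
  have h1 : ⟪ξ, n⟫ = -⟪v, n⟫ := by
    rw [hξ, inner_sub_left, real_inner_smul_left, hnn]; ring
  have h2 : ⟪v, n⟫ = 0 := by
    have := h1.symm.trans hperp
    linarith [neg_eq_zero.mp (by linarith : -⟪v, n⟫ = 0)]
  rw [hξ, h2]
  simp

/-- The tangent line to a strictly convex body meets the body only at the tangency point. -/
lemma tangent_line_misses {E : Type*} [NormedAddCommGroup E] [InnerProductSpace ℝ E]
    {Θ : Set E} (hconv : StrictConvex ℝ Θ)
    {p n ξ : E} (hp : p ∈ Θ) (hn : ‖n‖ = 1) (hsupp : ∀ z ∈ Θ, ⟪n, z - p⟫ ≤ 0)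
    (hperp : ⟪ξ, n⟫ = 0) (hξ : ξ ≠ 0) :
    ∀ s : ℝ, s ≠ 0 → p + s • ξ ∉ Θ := by
  intro s hs hz
  have hnξ : ⟪n, ξ⟫ = 0 := by rw [real_inner_comm]; exact hperp
  have hne : p ≠ p + s • ξ := by
    intro h
    have : s • ξ = 0 := by
      have := congrArg (· - p) h; simpa using this.symm
    exact (smul_ne_zero hs hξ) this
  have hmid : (1/2 : ℝ) • p + (1/2 : ℝ) • (p + s • ξ) ∈ interior Θ :=
    hconv hp hz hne (by norm_num) (by norm_num) (by norm_num)
  obtain ⟨ε, hε, hball⟩ := Metric.mem_nhds_iff.mp (mem_interior_iff_mem_nhds.mp hmid)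
  set w := (1/2 : ℝ) • p + (1/2 : ℝ) • (p + s • ξ) with hw
  have hwmem : w + (ε/2) • n ∈ Θ := by
    apply hball
    rw [Metric.mem_ball, dist_eq_norm]
    have : w + (ε/2) • n - w = (ε/2) • n := by abel
    rw [this, norm_smul, hn, mul_one, Real.norm_eq_abs, abs_of_pos (by positivity)]
    linarith
  have hle := hsupp _ hwmem
  have hexp : w + (ε/2) • n - p = (s/2) • ξ + (ε/2) • n := by
    rw [hw]; module
  rw [hexp, inner_add_right, real_inner_smul_right, real_inner_smul_right, hnξ,
    real_inner_self_eq_norm_sq, hn] at hle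
  norm_num at hle
  linarith

/-- A line through a point outside a convex set misses the set on at least one side. -/
lemma one_side_misses {E : Type*} [NormedAddCommGroup E] [InnerProductSpace ℝ E]
    {Θ : Set E} (hconv : Convex ℝ Θ) {p ξ : E} (hp : p ∉ Θ) :
    (∀ s : ℝ, 0 < s → p + s • ξ ∉ Θ) ∨ (∀ s : ℝ, s < 0 → p + s • ξ ∉ Θ) := by
  by_contra h
  push_neg at h
  obtain ⟨⟨a, ha, haΘ⟩, ⟨b, hb, hbΘ⟩⟩ := h
  have hab : (0:ℝ) < a - b := by linarith
  set l : ℝ := a / (a - b) with hl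
  set m : ℝ := -b / (a - b) with hm
  have hl0 : 0 ≤ l := by positivity
  have hm0 : 0 ≤ m := by
    apply div_nonneg _ hab.le; linarith
  have hab' : a - b ≠ 0 := ne_of_gt hab
  have hlm : l + m = 1 := by
    rw [hl, hm]
    field_simp
    ring
  have hcoef : l * b + m * a = 0 := by
    rw [hl, hm]
    field_simp
    ring
  have hcombo : l • (p + b • ξ) + m • (p + a • ξ) = p := by
    have h1 : l • (p + b • ξ) + m • (p + a • ξ) = (l + m) • p + (l * b + m * a) • ξ := by
      module
    rw [h1, hlm, hcoef]; simp
  have := hconv hbΘ haΘ hl0 hm0 hlm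
  rw [hcombo] at this
  exact hp this

/-- Forward propagation: if the forward ray from `γ t₀` misses the (closed) obstacle set,
the billiard ray is straight for all later times. -/
lemma fwd_prop {N : ℕ} {O : Set (EuclideanSpace ℝ (Fin N))}
    {nv : EuclideanSpace ℝ (Fin N) → EuclideanSpace ℝ (Fin N)}
    {γ ξ : ℝ → EuclideanSpace ℝ (Fin N)}
    (hγ : IsBilliardRay O nv γ ξ) (hO : IsClosed O) (t₀ : ℝ)
    (hmiss : ∀ s : ℝ, 0 < s → γ t₀ + s • ξ t₀ ∉ O) :
    ∀ t, t₀ ≤ t → γ t = γ t₀ + (t - t₀) • ξ t₀ := by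
  obtain ⟨hint, hne0, hloc⟩ := hγ
  intro T hT
  set L : ℝ → EuclideanSpace ℝ (Fin N) := fun s => γ t₀ + (s - t₀) • ξ t₀ with hLdef
  set A : Set ℝ := {t | t ∈ Set.Icc t₀ T ∧ ∀ s ∈ Set.Icc t₀ t, γ s = L s} with hAdef
  have ht₀A : t₀ ∈ A := by
    refine ⟨⟨le_refl _, hT⟩, fun s hs => ?_⟩
    have : s = t₀ := le_antisymm hs.2 hs.1
    simp [this, L]
  have hbdd : BddAbove A := ⟨T, fun x hx => hx.1.2⟩
  have hAne : A.Nonempty := ⟨t₀, ht₀A⟩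
  set u := sSup A with hu
  have hu₀ : t₀ ≤ u := le_csSup hbdd ht₀A
  have huT : u ≤ T := csSup_le hAne fun x hx => hx.1.2
  have hbelow : ∀ s, t₀ ≤ s → s < u → γ s = L s := by
    intro s hs hsu
    obtain ⟨x, hxA, hx⟩ := exists_lt_of_lt_csSup hAne hsu
    exact hxA.2 s ⟨hs, hx.le⟩
  have hkey : γ u = L u ∧ ∀ᶠ s in nhdsWithin u (Set.Ici u), γ s = L s := by
    rcases eq_or_lt_of_le hu₀ with h | h
    · obtain ⟨v, _, hr, _, _⟩ := hloc t₀
      constructor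
      · simp [← h, L]
      · rw [← h]
        filter_upwards [hr] with s hs
        rw [hs]
    · -- t₀ < u
      obtain ⟨v, hl, hr, hnf, hf⟩ := hloc u
      obtain ⟨a, ha, hIcc⟩ := mem_nhdsLE_iff_exists_Icc_subset.mp hl
      set m := max a t₀ with hm
      have hmu : m < u := max_lt ha h
      set s₁ := (m + u) / 2 with hs₁
      set s₂ := (s₁ + u) / 2 with hs₂
      have hms₁ : m < s₁ := by rw [hs₁]; linarith
      have hs₁u : s₁ < u := by rw [hs₁]; linarith
      have hs₁s₂ : s₁ < s₂ := by rw [hs₂]; linarith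
      have hs₂u : s₂ < u := by rw [hs₂]; linarith
      have ht₀s₁ : t₀ ≤ s₁ := le_trans (le_max_right a t₀) hms₁.le
      have has₁ : a ≤ s₁ := le_trans (le_max_left a t₀) hms₁.le
      have q₁ : γ u + (s₁ - u) • v = γ t₀ + (s₁ - t₀) • ξ t₀ := by
        have e := hIcc ⟨has₁, hs₁u.le⟩
        have e' := hbelow s₁ ht₀s₁ hs₁u
        rw [← e, e']
      have q₂ : γ u + (s₂ - u) • v = γ t₀ + (s₂ - t₀) • ξ t₀ := by
        have e := hIcc ⟨le_trans has₁ hs₁s₂.le, hs₂u.le⟩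
        have e' := hbelow s₂ (le_trans ht₀s₁ hs₁s₂.le) hs₂u
        rw [← e, e']
      have hv : v = ξ t₀ := by
        have h12 : (s₁ - s₂) • v = (s₁ - s₂) • ξ t₀ := by
          linear_combination (norm := module) q₁ - q₂
        exact smul_right_injective _ (sub_ne_zero.mpr hs₁s₂.ne) h12
      have hγu : γ u = L u := by
        rw [hv] at q₁
        show γ u = γ t₀ + (u - t₀) • ξ t₀
        linear_combination (norm := module) q₁
      have hnotfr : γ u ∉ frontier O := by
        rw [hγu]
        intro hmem
        exact hmiss (u - t₀) (by linarith) (hO.frontier_subset hmem)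
      have hξu : ξ u = ξ t₀ := (hnf hnotfr).trans hv
      refine ⟨hγu, ?_⟩
      filter_upwards [hr] with s hs
      rw [hs, hγu, hξu]
      show γ t₀ + (u - t₀) • ξ t₀ + (s - u) • ξ t₀ = γ t₀ + (s - t₀) • ξ t₀
      module
  obtain ⟨hγu, hev⟩ := hkey
  rcases eq_or_lt_of_le huT with hEq | hlt
  · rw [← hEq]; exact hγu
  · exfalso
    obtain ⟨b, hub, hIcc⟩ := mem_nhdsGE_iff_exists_Icc_subset.mp hev
    set t' := min b T with ht'
    have ht'u : u < t' := lt_min hub hlt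
    have ht'A : t' ∈ A := by
      refine ⟨⟨le_trans hu₀ ht'u.le, min_le_right _ _⟩, fun s hs => ?_⟩
      rcases lt_or_ge s u with hsu | hus
      · exact hbelow s hs.1 hsu
      · rcases eq_or_lt_of_le hus with hsu | hsu
        · rw [← hsu]; exact hγu
        · exact hIcc ⟨hsu.le, le_trans hs.2 (min_le_left _ _)⟩
    have := le_csSup hbdd ht'A
    linarith
  
/-- Backward propagation: mirror of `fwd_prop`. -/
lemma bwd_prop {N : ℕ} {O : Set (EuclideanSpace ℝ (Fin N))}
    {nv : EuclideanSpace ℝ (Fin N) → EuclideanSpace ℝ (Fin N)}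
    {γ ξ : ℝ → EuclideanSpace ℝ (Fin N)}
    (hγ : IsBilliardRay O nv γ ξ) (hO : IsClosed O) (t₀ : ℝ)
    (hstart : ∀ᶠ s in nhdsWithin t₀ (Set.Iic t₀), γ s = γ t₀ + (s - t₀) • ξ t₀)
    (hmiss : ∀ s : ℝ, s < 0 → γ t₀ + s • ξ t₀ ∉ O) :
    ∀ t, t ≤ t₀ → γ t = γ t₀ + (t - t₀) • ξ t₀ := by
  obtain ⟨hint, hne0, hloc⟩ := hγ
  intro T hT
  set L : ℝ → EuclideanSpace ℝ (Fin N) := fun s => γ t₀ + (s - t₀) • ξ t₀ with hLdef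
  set A : Set ℝ := {t | t ∈ Set.Icc T t₀ ∧ ∀ s ∈ Set.Icc t t₀, γ s = L s} with hAdef
  have ht₀A : t₀ ∈ A := by
    refine ⟨⟨hT, le_refl _⟩, fun s hs => ?_⟩
    have : s = t₀ := le_antisymm hs.2 hs.1
    simp [this, L]
  have hbdd : BddBelow A := ⟨T, fun x hx => hx.1.1⟩
  have hAne : A.Nonempty := ⟨t₀, ht₀A⟩
  set u := sInf A with hu
  have hu₀ : u ≤ t₀ := csInf_le hbdd ht₀A
  have huT : T ≤ u := le_csInf hAne fun x hx => hx.1.1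
  have habove : ∀ s, u < s → s ≤ t₀ → γ s = L s := by
    intro s hsu hs
    obtain ⟨x, hxA, hx⟩ := exists_lt_of_csInf_lt hAne hsu
    exact hxA.2 s ⟨hx.le, hs⟩
  have hkey : γ u = L u ∧ ∀ᶠ s in nhdsWithin u (Set.Iic u), γ s = L s := by
    rcases eq_or_lt_of_le hu₀ with h | h
    · constructor
      · simp [h, L]
      · rw [h]
        filter_upwards [hstart] with s hs
        rw [hs]
    · -- u < t₀
      obtain ⟨v, hl, hr, hnf, hf⟩ := hloc u
      obtain ⟨b, hb, hIcc⟩ := mem_nhdsGE_iff_exists_Icc_subset.mp hr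
      set m := min b t₀ with hm
      have hmu : u < m := lt_min hb h
      set s₁ := (u + m) / 2 with hs₁
      set s₂ := (u + s₁) / 2 with hs₂
      have hs₁m : s₁ < m := by rw [hs₁]; linarith
      have hus₁ : u < s₁ := by rw [hs₁]; linarith
      have hs₂s₁ : s₂ < s₁ := by rw [hs₂]; linarith
      have hus₂ : u < s₂ := by rw [hs₂]; linarith
      have hs₁t₀ : s₁ ≤ t₀ := le_trans hs₁m.le (min_le_right _ _)
      have hs₁b : s₁ ≤ b := le_trans hs₁m.le (min_le_left _ _)
      have q₁ : γ u + (s₁ - u) • ξ u = γ t₀ + (s₁ - t₀) • ξ t₀ := by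
        have e := hIcc ⟨hus₁.le, hs₁b⟩
        have e' := habove s₁ hus₁ hs₁t₀
        rw [← e, e']
      have q₂ : γ u + (s₂ - u) • ξ u = γ t₀ + (s₂ - t₀) • ξ t₀ := by
        have e := hIcc ⟨hus₂.le, le_trans hs₂s₁.le hs₁b⟩
        have e' := habove s₂ hus₂ (le_trans hs₂s₁.le hs₁t₀)
        rw [← e, e']
      have hξu : ξ u = ξ t₀ := by
        have h12 : (s₁ - s₂) • ξ u = (s₁ - s₂) • ξ t₀ := by
          linear_combination (norm := module) q₁ - q₂
        exact smul_right_injective _ (sub_ne_zero.mpr hs₂s₁.ne') h12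
      have hγu : γ u = L u := by
        rw [hξu] at q₁
        show γ u = γ t₀ + (u - t₀) • ξ t₀
        linear_combination (norm := module) q₁
      have hnotfr : γ u ∉ frontier O := by
        rw [hγu]
        intro hmem
        exact hmiss (u - t₀) (by linarith) (hO.frontier_subset hmem)
      have hv : v = ξ t₀ := (hnf hnotfr).symm.trans hξu
      refine ⟨hγu, ?_⟩
      filter_upwards [hl] with s hs
      rw [hs, hγu, hv]
      show γ t₀ + (u - t₀) • ξ t₀ + (s - u) • ξ t₀ = γ t₀ + (s - t₀) • ξ t₀
      module
  obtain ⟨hγu, hev⟩ := hkey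
  rcases eq_or_lt_of_le huT with hEq | hlt
  · rw [hEq]; exact hγu
  · exfalso
    obtain ⟨a, hau, hIcc⟩ := mem_nhdsLE_iff_exists_Icc_subset.mp hev
    set t' := max a T with ht'
    have ht'u : t' < u := max_lt hau hlt
    have ht'A : t' ∈ A := by
      refine ⟨⟨le_max_right _ _, le_trans ht'u.le hu₀⟩, fun s hs => ?_⟩
      rcases lt_or_ge u s with hsu | hus
      · exact habove s hsu hs.2
      · rcases eq_or_lt_of_le hus with hsu | hsu
        · rw [hsu]; exact hγu
        · exact hIcc ⟨le_trans (le_max_left _ _) hs.1, hus⟩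
    have := csInf_le hbdd ht'A
    linarith

/-- Outside two disjoint smooth compact strictly convex obstacles in ℝ³ (with `nv` the
outward unit normal field of each obstacle), no billiard ray is tangent to `Θ₁ ∪ Θ₂`
at three or more distinct points. -/
theorem stmt_5 (Θ₁ Θ₂ : Set (EuclideanSpace ℝ (Fin 3)))
    (h₁c : IsCompact Θ₁) (h₂c : IsCompact Θ₂)
    (h₁conv : StrictConvex ℝ Θ₁) (h₂conv : StrictConvex ℝ Θ₂)
    (hdisj : Disjoint Θ₁ Θ₂)
    (nv : EuclideanSpace ℝ (Fin 3) → EuclideanSpace ℝ (Fin 3))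
    (hnv₁ : ∀ y ∈ frontier Θ₁, ‖nv y‖ = 1 ∧ ∀ z ∈ Θ₁, ⟪nv y, z - y⟫ ≤ 0)
    (hnv₂ : ∀ y ∈ frontier Θ₂, ‖nv y‖ = 1 ∧ ∀ z ∈ Θ₂, ⟪nv y, z - y⟫ ≤ 0)
    (γ ξ : ℝ → EuclideanSpace ℝ (Fin 3))
    (hγ : IsBilliardRay (Θ₁ ∪ Θ₂) nv γ ξ) :
    ¬ ∃ t₁ t₂ t₃ : ℝ, t₁ < t₂ ∧ t₂ < t₃ ∧
      γ t₁ ≠ γ t₂ ∧ γ t₂ ≠ γ t₃ ∧ γ t₁ ≠ γ t₃ ∧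
      (∀ t ∈ ({t₁, t₂, t₃} : Set ℝ),
        γ t ∈ frontier (Θ₁ ∪ Θ₂) ∧ ⟪ξ t, nv (γ t)⟫ = 0) := by
  rintro ⟨t₁, t₂, t₃, h12, h23, -, -, -, htan⟩
  have hO : IsClosed (Θ₁ ∪ Θ₂) := (h₁c.union h₂c).isClosed
  have h₁cl : IsClosed Θ₁ := h₁c.isClosed
  have h₂cl : IsClosed Θ₂ := h₂c.isClosed
  obtain ⟨hb₂, hperp₂⟩ := htan t₂ (by simp)
  have hb₁ := (htan t₁ (by simp)).1
  have hb₃ := (htan t₃ (by simp)).1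
  have hξ₂ : ξ t₂ ≠ 0 := hγ.2.1 t₂
  -- γ t₂ lies on the frontier of one of the two obstacles
  have hfr : γ t₂ ∈ frontier Θ₁ ∪ frontier Θ₂ := by
    have hcl : γ t₂ ∈ closure Θ₁ ∪ closure Θ₂ := by
      have := hb₂.1
      rwa [closure_union] at this
    have hni₁ : γ t₂ ∉ interior Θ₁ := fun h =>
      hb₂.2 (interior_mono Set.subset_union_left h)
    have hni₂ : γ t₂ ∉ interior Θ₂ := fun h =>
      hb₂.2 (interior_mono Set.subset_union_right h)
    rcases hcl with h | h
    · exact Or.inl ⟨h, hni₁⟩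
    · exact Or.inr ⟨h, hni₂⟩
  have hn1 : ‖nv (γ t₂)‖ = 1 := by
    rcases hfr with h | h
    exacts [(hnv₁ _ h).1, (hnv₂ _ h).1]
  -- the tangent line misses the obstacles on one full side of γ t₂
  have hside : (∀ s : ℝ, 0 < s → γ t₂ + s • ξ t₂ ∉ Θ₁ ∪ Θ₂) ∨
      (∀ s : ℝ, s < 0 → γ t₂ + s • ξ t₂ ∉ Θ₁ ∪ Θ₂) := by
    rcases hfr with h | h
    · obtain ⟨hn, hsupp⟩ := hnv₁ _ h
      have hpΘ : γ t₂ ∈ Θ₁ := h₁cl.frontier_subset h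
      have hmiss₁ : ∀ s : ℝ, s ≠ 0 → γ t₂ + s • ξ t₂ ∉ Θ₁ :=
        tangent_line_misses h₁conv hpΘ hn hsupp hperp₂ hξ₂
      have hp₂ : γ t₂ ∉ Θ₂ := fun h2 => (Set.disjoint_left.mp hdisj hpΘ) h2
      rcases one_side_misses h₂conv.convex (p := γ t₂) (ξ := ξ t₂) hp₂ with h2 | h2
      · exact Or.inl fun s hs => by
          rintro (hm | hm)
          exacts [hmiss₁ s hs.ne' hm, h2 s hs hm]
      · exact Or.inr fun s hs => by
          rintro (hm | hm)
          exacts [hmiss₁ s hs.ne hm, h2 s hs hm]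
    · obtain ⟨hn, hsupp⟩ := hnv₂ _ h
      have hpΘ : γ t₂ ∈ Θ₂ := h₂cl.frontier_subset h
      have hmiss₂ : ∀ s : ℝ, s ≠ 0 → γ t₂ + s • ξ t₂ ∉ Θ₂ :=
        tangent_line_misses h₂conv hpΘ hn hsupp hperp₂ hξ₂
      have hp₁ : γ t₂ ∉ Θ₁ := fun h1 => (Set.disjoint_right.mp hdisj hpΘ) h1
      rcases one_side_misses h₁conv.convex (p := γ t₂) (ξ := ξ t₂) hp₁ with h1 | h1
      · exact Or.inl fun s hs => by
          rintro (hm | hm)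
          exacts [h1 s hs hm, hmiss₂ s hs.ne' hm]
      · exact Or.inr fun s hs => by
          rintro (hm | hm)
          exacts [h1 s hs hm, hmiss₂ s hs.ne hm]
  -- the velocity is continuous through the tangency (trivial reflection)
  obtain ⟨v, hl, hr, hnf, hf⟩ := hγ.2.2 t₂
  have hv : v = ξ t₂ := tangent_reflection hn1 (hf hb₂) hperp₂
  have hstart : ∀ᶠ s in nhdsWithin t₂ (Set.Iic t₂), γ s = γ t₂ + (s - t₂) • ξ t₂ := by
    filter_upwards [hl] with s hs
    rw [hs, hv]
  rcases hside with hm | hm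
  · have h3 := fwd_prop hγ hO t₂ hm t₃ h23.le
    exact hm (t₃ - t₂) (by linarith) (by rw [← h3]; exact hO.frontier_subset hb₃)
  · have h1 := bwd_prop hγ hO t₂ hstart hm t₁ h12.le
    exact hm (t₁ - t₂) (by linarith) (by rw [← h1]; exact hO.frontier_subset hb₁)
end
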